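/- Let T > 0 and 0 ≤ t ≤ T. Let L, y¹, y² : [0,T] → ℝ be continuous functions with y¹_r ≥ L_r and y²_r ≥ L_r for all r, and let k¹, k² : [0,T] → ℝ be continuous nondecreasing functions with k¹_0 = k²_0 = 0 whose Lebesgue–Stieltjes measures satisfy ∫_{[t,T]} (y¹_r − L_r) dk¹_r = 0 and ∫_{[t,T]} (y²_r − L_r) dk²_r = 0. Then ∫_{[t,T]} (y¹_r − y²_r) d(k¹ − k²)_r ≤ 0, i.e., ∫_{[t,T]} (y¹_r − y²_r) dk¹_r ≤ ∫_{[t,T]} (y¹_r − y²_r) dk²_r. -/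

import Mathlib

open Set MeasureTheory

/-- If `y¹, y²` are continuous paths above a continuous lower barrier `L` on `[0,T]`,
and `k¹, k²` are continuous nondecreasing functions starting at `0` whose
Lebesgue–Stieltjes measures satisfy the Skorohod minimality conditions
`∫_{[t,T]} (yⁱ - L) dkⁱ = 0`, then
`∫_{[t,T]} (y¹ - y²) dk¹ ≤ ∫_{[t,T]} (y¹ - y²) dk²`. -/
theorem lower_barrier_skorohod_integral_le (T t : ℝ) (hT : 0 < T) (ht : 0 ≤ t) (htT : t ≤ T)
    (L y1 y2 : ℝ → ℝ)
    (hL : ContinuousOn L (Set.Icc 0 T))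
    (hy1 : ContinuousOn y1 (Set.Icc 0 T))
    (hy2 : ContinuousOn y2 (Set.Icc 0 T))
    (hy1L : ∀ r ∈ Set.Icc (0 : ℝ) T, L r ≤ y1 r)
    (hy2L : ∀ r ∈ Set.Icc (0 : ℝ) T, L r ≤ y2 r)
    (k1 k2 : StieltjesFunction ℝ)
    (hk1c : ContinuousOn (⇑k1) (Set.Icc 0 T))
    (hk2c : ContinuousOn (⇑k2) (Set.Icc 0 T))
    (hk10 : k1 0 = 0) (hk20 : k2 0 = 0)
    (hmin1 : ∫ r in Set.Icc t T, (y1 r - L r) ∂k1.measure = 0)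
    (hmin2 : ∫ r in Set.Icc t T, (y2 r - L r) ∂k2.measure = 0) :
    ∫ r in Set.Icc t T, (y1 r - y2 r) ∂k1.measure ≤
      ∫ r in Set.Icc t T, (y1 r - y2 r) ∂k2.measure := by
  have hsub : Set.Icc t T ⊆ Set.Icc (0:ℝ) T := Set.Icc_subset_Icc ht le_rfl
  have hcpt : IsCompact (Set.Icc t T) := isCompact_Icc
  have h1L : ContinuousOn (fun r => y1 r - L r) (Set.Icc t T) :=
    (hy1.sub hL).mono hsub
  have h2L : ContinuousOn (fun r => y2 r - L r) (Set.Icc t T) :=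
    (hy2.sub hL).mono hsub
  have i11 : IntegrableOn (fun r => y1 r - L r) (Set.Icc t T) k1.measure :=
    h1L.integrableOn_compact hcpt
  have i21 : IntegrableOn (fun r => y2 r - L r) (Set.Icc t T) k1.measure :=
    h2L.integrableOn_compact hcpt
  have i12 : IntegrableOn (fun r => y1 r - L r) (Set.Icc t T) k2.measure :=
    h1L.integrableOn_compact hcpt
  have i22 : IntegrableOn (fun r => y2 r - L r) (Set.Icc t T) k2.measure :=
    h2L.integrableOn_compact hcpt
  have key : ∀ (μ : Measure ℝ), IntegrableOn (fun r => y1 r - L r) (Set.Icc t T) μ →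
      IntegrableOn (fun r => y2 r - L r) (Set.Icc t T) μ →
      ∫ r in Set.Icc t T, (y1 r - y2 r) ∂μ =
        (∫ r in Set.Icc t T, (y1 r - L r) ∂μ) - ∫ r in Set.Icc t T, (y2 r - L r) ∂μ := by
    intro μ h1 h2
    rw [← integral_sub h1 h2]
    congr 1
    funext r
    ring
  have pos1 : 0 ≤ ∫ r in Set.Icc t T, (y2 r - L r) ∂k1.measure :=
    setIntegral_nonneg measurableSet_Icc (fun r hr => sub_nonneg.2 (hy2L r (hsub hr)))
  have pos2 : 0 ≤ ∫ r in Set.Icc t T, (y1 r - L r) ∂k2.measure :=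
    setIntegral_nonneg measurableSet_Icc (fun r hr => sub_nonneg.2 (hy1L r (hsub hr)))
  calc ∫ r in Set.Icc t T, (y1 r - y2 r) ∂k1.measure
      = 0 - ∫ r in Set.Icc t T, (y2 r - L r) ∂k1.measure := by
        rw [key k1.measure i11 i21, hmin1]
    _ ≤ 0 := by linarith
    _ ≤ (∫ r in Set.Icc t T, (y1 r - L r) ∂k2.measure) - 0 := by linarith
    _ = ∫ r in Set.Icc t T, (y1 r - y2 r) ∂k2.measure := by
        rw [key k2.measure i12 i22, hmin2]
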